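/- Weak duality holds for the discrete WFR problem: for any transport plan R with Rᵢⱼ ≥ 0 and any dual variables (φ, ψ) satisfying φᵢ + ψⱼ ≤ Cᵢⱼ for all i, j, one has Σᵢ(1 - e^{-φᵢ})μᵢ + Σⱼ(1 - e^{-ψⱼ})νⱼ ≤ Σᵢⱼ CᵢⱼRᵢⱼ + KL(Σⱼ Rᵢⱼ ‖ μ) + KL(Σᵢ Rᵢⱼ ‖ ν). -/

import Mathlib

noncomputable def klR (r h : ℝ) : ℝ := r * Real.log (r / h) - r + h

lemma coe_sum_ereal {α : Type*} (s : Finset α) (f : α → ℝ) :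
    ((∑ x ∈ s, f x : ℝ) : EReal) = ∑ x ∈ s, (f x : EReal) :=
  map_sum (⟨⟨(↑), EReal.coe_zero⟩, EReal.coe_add⟩ : ℝ →+ EReal) f s

lemma kl_key (a r h : ℝ) (hr : 0 ≤ r) (hh : 0 < h) :
    (1 - Real.exp (-a)) * h ≤ a * r + klR r h := by
  unfold klR
  rcases hr.eq_or_lt with h0 | h0
  · subst h0
    simp only [zero_div, Real.log_zero, mul_zero, zero_mul, sub_zero, zero_add]
    nlinarith [Real.exp_pos (-a), hh]
  · have h1 : Real.exp (-a - Real.log (r / h)) = Real.exp (-a) * (h / r) := by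
      rw [Real.exp_sub, Real.exp_log (by positivity)]
      field_simp
    have h2 := Real.add_one_le_exp (-a - Real.log (r / h))
    rw [h1] at h2
    have h3 : r * (-a - Real.log (r / h) + 1) ≤ Real.exp (-a) * h := by
      have := mul_le_mul_of_nonneg_left h2 h0.le
      calc r * (-a - Real.log (r / h) + 1) ≤ r * (Real.exp (-a) * (h / r)) := this
        _ = Real.exp (-a) * h := by field_simp
    nlinarith [h3]

theorem wfr_weak_duality (I J : ℕ) (μ : Fin I → ℝ) (ν : Fin J → ℝ)
    (hμ : ∀ i, 0 < μ i) (hν : ∀ j, 0 < ν j)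
    (C : Fin I → Fin J → EReal) (hC : ∀ i j, 0 ≤ C i j)
    (R : Fin I → Fin J → ℝ) (hR : ∀ i j, 0 ≤ R i j)
    (φ : Fin I → ℝ) (ψ : Fin J → ℝ)
    (hdual : ∀ i j, ((φ i + ψ j : ℝ) : EReal) ≤ C i j) :
    ((∑ i, (1 - Real.exp (-φ i)) * μ i + ∑ j, (1 - Real.exp (-ψ j)) * ν j : ℝ) : EReal) ≤
      (∑ i, ∑ j, C i j * ((R i j : ℝ) : EReal)) +
        ((∑ i, klR (∑ j, R i j) (μ i) + ∑ j, klR (∑ i, R i j) (ν j) : ℝ) : EReal) := by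
  have split : ∑ i, ∑ j, (φ i + ψ j) * R i j =
      ∑ i, φ i * ∑ j, R i j + ∑ j, ψ j * ∑ i, R i j := by
    simp_rw [add_mul, Finset.sum_add_distrib]
    congr 1
    · simp [Finset.mul_sum]
    · rw [Finset.sum_comm]
      simp [Finset.mul_sum]
  have real_ineq : ∑ i, (1 - Real.exp (-φ i)) * μ i + ∑ j, (1 - Real.exp (-ψ j)) * ν j ≤
      (∑ i, ∑ j, (φ i + ψ j) * R i j) +
        (∑ i, klR (∑ j, R i j) (μ i) + ∑ j, klR (∑ i, R i j) (ν j)) := by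
    have hA : ∑ i, (1 - Real.exp (-φ i)) * μ i ≤
        ∑ i, (φ i * ∑ j, R i j + klR (∑ j, R i j) (μ i)) :=
      Finset.sum_le_sum fun i _ =>
        kl_key (φ i) (∑ j, R i j) (μ i) (Finset.sum_nonneg fun j _ => hR i j) (hμ i)
    have hB : ∑ j, (1 - Real.exp (-ψ j)) * ν j ≤
        ∑ j, (ψ j * ∑ i, R i j + klR (∑ i, R i j) (ν j)) :=
      Finset.sum_le_sum fun j _ =>
        kl_key (ψ j) (∑ i, R i j) (ν j) (Finset.sum_nonneg fun i _ => hR i j) (hν j)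
    calc ∑ i, (1 - Real.exp (-φ i)) * μ i + ∑ j, (1 - Real.exp (-ψ j)) * ν j
        ≤ ∑ i, (φ i * ∑ j, R i j + klR (∑ j, R i j) (μ i)) +
            ∑ j, (ψ j * ∑ i, R i j + klR (∑ i, R i j) (ν j)) := add_le_add hA hB
      _ = (∑ i, ∑ j, (φ i + ψ j) * R i j) +
            (∑ i, klR (∑ j, R i j) (μ i) + ∑ j, klR (∑ i, R i j) (ν j)) := by
          rw [split, Finset.sum_add_distrib, Finset.sum_add_distrib]
          ring
  have h2 : ((∑ i, ∑ j, (φ i + ψ j) * R i j : ℝ) : EReal) ≤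
      ∑ i, ∑ j, C i j * ((R i j : ℝ) : EReal) := by
    rw [coe_sum_ereal]
    refine Finset.sum_le_sum fun i _ => ?_
    rw [coe_sum_ereal]
    refine Finset.sum_le_sum fun j _ => ?_
    rw [EReal.coe_mul]
    exact mul_le_mul_of_nonneg_right (hdual i j) (by exact_mod_cast hR i j)
  calc ((∑ i, (1 - Real.exp (-φ i)) * μ i + ∑ j, (1 - Real.exp (-ψ j)) * ν j : ℝ) : EReal)
      ≤ (((∑ i, ∑ j, (φ i + ψ j) * R i j) +
          (∑ i, klR (∑ j, R i j) (μ i) + ∑ j, klR (∑ i, R i j) (ν j)) : ℝ) : EReal) :=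
        EReal.coe_le_coe_iff.mpr real_ineq
    _ = ((∑ i, ∑ j, (φ i + ψ j) * R i j : ℝ) : EReal) +
          ((∑ i, klR (∑ j, R i j) (μ i) + ∑ j, klR (∑ i, R i j) (ν j) : ℝ) : EReal) :=
        EReal.coe_add _ _
    _ ≤ _ := add_le_add h2 le_rfl
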